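/- Suppose a necklace O' is obtained from a necklace O by removing one bead v (either white or black). Then card(P_j(O')) ≤ card(P_j(O)) for every j ≥ 1, and consequently μ_J(O') ≤ μ_J(O) for every J ≥ 1. -/

import Mathlib

namespace Necklace

/-- A necklace is modelled as a list of bead colours, listed in clockwise order:
`true` is a white bead, `false` a black bead.  Beads are identified with their
indices in the list. -/
def dist (L : List Bool) (i j : ℕ) : ℕ := (j + L.length - i) % L.length

/-- The number of black beads strictly inside the clockwise arc from bead `i` to bead `j`. -/
def arcBlack (L : List Bool) (i j : ℕ) : ℕ :=
  (List.range (dist L i j)).countP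
    (fun k => decide (k ≠ 0 ∧ L.getD ((i + k) % L.length) true = false))

/-- The number of white beads strictly inside the clockwise arc from bead `i` to bead `j`. -/
def arcWhite (L : List Bool) (i j : ℕ) : ℕ :=
  (List.range (dist L i j)).countP
    (fun k => decide (k ≠ 0 ∧ L.getD ((i + k) % L.length) true = true))

/-- The number of white beads of the necklace. -/
def whiteCount (L : List Bool) : ℕ := L.countP (fun x => x)

/-- The set `P_j` of ordered pairs `(o₁, o₂)` of distinct white beads such that the
clockwise arc from `o₁` to `o₂` contains at least `j` black beads. -/
def Pset (L : List Bool) (j : ℕ) : Finset (ℕ × ℕ) :=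
  (Finset.range L.length ×ˢ Finset.range L.length).filter
    (fun p => p.1 ≠ p.2 ∧ L.getD p.1 true = true ∧ L.getD p.2 true = true ∧
      j ≤ arcBlack L p.1 p.2)

/-- The `J`-mixture `μ_J(O) = Σ_{j=1}^J card(P_j)`. -/
def mu (J : ℕ) (L : List Bool) : ℕ := ∑ j ∈ Finset.Icc 1 J, (Pset L j).card

end Necklace

namespace NecklaceAux

lemma dist_form (n a b : ℕ) (ha : a < n) (hb : b < n) :
    (b + n - a) % n = if a ≤ b then b - a else b + n - a := by
  split_ifs with h
  · have h1 : b + n - a = (b - a) + n := by omega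
    rw [h1, Nat.add_mod_right, Nat.mod_eq_of_lt (by omega)]
  · exact Nat.mod_eq_of_lt (by omega)

lemma dist_add (n a b : ℕ) (ha : a < n) (hb : b < n) :
    (a + (b + n - a) % n) % n = b := by
  conv_lhs => rw [Nat.add_mod, Nat.mod_mod_of_dvd _ dvd_rfl, ← Nat.add_mod]
  have h1 : a + (b + n - a) = b + n := by omega
  rw [h1, Nat.add_mod_right, Nat.mod_eq_of_lt hb]

lemma dist_ne_zero (n a b : ℕ) (ha : a < n) (hb : b < n) (hab : a ≠ b) :
    (b + n - a) % n ≠ 0 := by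
  rw [dist_form n a b ha hb]; split_ifs <;> omega

lemma key_lt (m v i j c : ℕ) (hi : i < m) (hj : j < m) (hc : c < m)
    (h2 : (c + m - i) % m < (j + m - i) % m) :
    ((if c < v then c else c + 1) + (m + 1) - (if i < v then i else i + 1)) % (m + 1) <
    ((if j < v then j else j + 1) + (m + 1) - (if i < v then i else i + 1)) % (m + 1) := by
  rw [dist_form m i c hi hc, dist_form m i j hi hj] at h2
  rw [dist_form (m+1) _ _ (by split_ifs <;> omega) (by split_ifs <;> omega),
      dist_form (m+1) _ _ (by split_ifs <;> omega) (by split_ifs <;> omega)]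
  split_ifs at * <;> omega

lemma mod_arc (m i k : ℕ) (hi : i < m) (hk : k < m) : ((i + k) % m + m - i) % m = k := by
  rcases Nat.lt_or_ge (i + k) m with h | h
  · rw [Nat.mod_eq_of_lt h]
    have h1 : i + k + m - i = k + m := by omega
    rw [h1, Nat.add_mod_right, Nat.mod_eq_of_lt hk]
  · have h2 : (i + k) % m = i + k - m := by
      rw [Nat.mod_eq_sub_mod h, Nat.mod_eq_of_lt (by omega)]
    rw [h2]
    have h3 : i + k - m + m - i = k := by omega
    rw [h3, Nat.mod_eq_of_lt hk]

lemma countP_range (d : ℕ) (p : ℕ → Bool) :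
    (List.range d).countP p = ((Finset.range d).filter (fun k => p k = true)).card := by
  simp [Finset.filter, Finset.card, Finset.range, Multiset.range,
    List.countP_eq_length_filter, Multiset.filter_coe]

lemma getD_erase (L : List Bool) (v x : ℕ) (hv : v < L.length) (hx : x < L.length - 1) :
    (L.eraseIdx v).getD x true = L.getD (if x < v then x else x + 1) true := by
  have hx' : x < (L.eraseIdx v).length := by rw [List.length_eraseIdx]; split_ifs <;> omega
  rw [List.getD_eq_getElem _ _ hx', List.getElem_eraseIdx]
  split_ifs with h
  · rw [List.getD_eq_getElem _ _ (by omega)]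
  · rw [List.getD_eq_getElem _ _ (by omega)]

lemma arcBlack_le (L : List Bool) (v : ℕ) (hv : v < L.length) (i j : ℕ)
    (hi : i < L.length - 1) (hj : j < L.length - 1) :
    Necklace.arcBlack (L.eraseIdx v) i j ≤
      Necklace.arcBlack L (if i < v then i else i + 1) (if j < v then j else j + 1) := by
  set m := L.length - 1 with hm
  have hn : L.length = m + 1 := by omega
  have hm0 : 0 < m := by omega
  have hL' : (L.eraseIdx v).length = m := by rw [List.length_eraseIdx]; split_ifs <;> omega
  set fi := if i < v then i else i + 1 with hfi
  set fj := if j < v then j else j + 1 with hfj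
  have hfin : fi < m + 1 := by rw [hfi]; split_ifs <;> omega
  have hfjn : fj < m + 1 := by rw [hfj]; split_ifs <;> omega
  unfold Necklace.arcBlack Necklace.dist
  rw [hL', hn, countP_range, countP_range]
  apply Finset.card_le_card_of_injOn
    (fun k => ((if (i + k) % m < v then (i + k) % m else (i + k) % m + 1) + (m + 1) - fi) % (m + 1))
  · intro k hk
    simp only [Finset.mem_coe, Finset.mem_filter, Finset.mem_range, decide_eq_true_eq] at hk ⊢
    obtain ⟨hkd, hk0, hkb⟩ := hk
    set c := (i + k) % m with hc
    have hcm : c < m := Nat.mod_lt _ hm0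
    have hdc : (c + m - i) % m = k := mod_arc m i k hi (by
      calc k < (j + m - i) % m := hkd
      _ < m := Nat.mod_lt _ hm0)
    set fc := if c < v then c else c + 1 with hfc
    have hfcn : fc < m + 1 := by rw [hfc]; split_ifs <;> omega
    have hic : i ≠ c := by
      intro h
      rw [← h] at hdc
      have : (i + m - i) % m = 0 := by
        have : i + m - i = m := by omega
        rw [this, Nat.mod_self]
      omega
    refine ⟨?_, ?_, ?_⟩
    · exact key_lt m v i j c hi hj hcm (by rw [hdc]; exact hkd)
    · apply dist_ne_zero (m + 1) fi fc hfin hfcn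
      rw [hfi, hfc]; split_ifs <;> omega
    · rw [dist_add (m + 1) fi fc hfin hfcn]
      have := getD_erase L v c hv hcm
      rw [← hfc] at this
      rw [← this]
      exact hkb
  · intro k1 hk1 k2 hk2 heq
    simp only [Finset.mem_coe, Finset.mem_filter, Finset.mem_range, decide_eq_true_eq] at hk1 hk2
    have hc1 : (i + k1) % m < m := Nat.mod_lt _ hm0
    have hc2 : (i + k2) % m < m := Nat.mod_lt _ hm0
    have hfc1 : (if (i + k1) % m < v then (i + k1) % m else (i + k1) % m + 1) < m + 1 := by
      split_ifs <;> omega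
    have hfc2 : (if (i + k2) % m < v then (i + k2) % m else (i + k2) % m + 1) < m + 1 := by
      split_ifs <;> omega
    have h1 := dist_add (m + 1) fi _ hfin hfc1
    have h2 := dist_add (m + 1) fi _ hfin hfc2
    simp only at heq
    rw [heq] at h1
    rw [h2] at h1
    have hcc : (i + k1) % m = (i + k2) % m := by split_ifs at h1 <;> omega
    have e1 := mod_arc m i k1 hi (by
      calc k1 < (j + m - i) % m := hk1.1
      _ < m := Nat.mod_lt _ hm0)
    have e2 := mod_arc m i k2 hi (by
      calc k2 < (j + m - i) % m := hk2.1
      _ < m := Nat.mod_lt _ hm0)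
    rw [← e1, ← e2, hcc]

end NecklaceAux

/-- Removing one bead (white or black) from a necklace does not increase any of the
sets `P_j`, and hence does not increase the `J`-mixture. -/
theorem necklace_mixture_remove_bead (L : List Bool) (v : ℕ) (hv : v < L.length) :
    (∀ j : ℕ, 1 ≤ j →
        (Necklace.Pset (L.eraseIdx v) j).card ≤ (Necklace.Pset L j).card) ∧
    (∀ J : ℕ, 1 ≤ J → Necklace.mu J (L.eraseIdx v) ≤ Necklace.mu J L) := by
  have hL' : (L.eraseIdx v).length = L.length - 1 := by
    rw [List.length_eraseIdx]; split_ifs <;> omega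
  have main : ∀ j : ℕ, (Necklace.Pset (L.eraseIdx v) j).card ≤ (Necklace.Pset L j).card := by
    intro j
    apply Finset.card_le_card_of_injOn
      (fun p => (if p.1 < v then p.1 else p.1 + 1, if p.2 < v then p.2 else p.2 + 1))
    · intro p hp
      simp only [Necklace.Pset, Finset.mem_coe, Finset.mem_filter, Finset.mem_product, Finset.mem_range, hL'] at hp ⊢
      obtain ⟨⟨h1, h2⟩, hne, hw1, hw2, harc⟩ := hp
      refine ⟨⟨by split_ifs <;> omega, by split_ifs <;> omega⟩, ?_, ?_, ?_, ?_⟩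
      · show (if p.1 < v then p.1 else p.1 + 1) ≠ (if p.2 < v then p.2 else p.2 + 1)
        split_ifs <;> omega
      · rw [← NecklaceAux.getD_erase L v p.1 hv h1]; exact hw1
      · rw [← NecklaceAux.getD_erase L v p.2 hv h2]; exact hw2
      · exact le_trans harc (NecklaceAux.arcBlack_le L v hv p.1 p.2 h1 h2)
    · intro p1 hp1 p2 hp2 heq
      have e1 : (if p1.1 < v then p1.1 else p1.1 + 1) = (if p2.1 < v then p2.1 else p2.1 + 1) :=
        congrArg Prod.fst heq
      have e2 : (if p1.2 < v then p1.2 else p1.2 + 1) = (if p2.2 < v then p2.2 else p2.2 + 1) :=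
        congrArg Prod.snd heq
      have h1 : p1.1 = p2.1 := by split_ifs at e1 <;> omega
      have h2 : p1.2 = p2.2 := by split_ifs at e2 <;> omega
      exact Prod.ext h1 h2
  refine ⟨fun j _ => main j, fun J _ => ?_⟩
  exact Finset.sum_le_sum fun j _ => main j
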